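/- For every n×n complex cross matrix X there exists a permutation σ of Fin n such that the symmetrically permuted matrix M, defined by M i j = X (σ i) (σ j), is block diagonal with diagonal blocks of size at most 2: namely, M i j = 0 whenever ⌊i/2⌋ ≠ ⌊j/2⌋ (integer division on the 0-based indices). -/
import Mathlib


/-- An `n × n` complex matrix is a *cross matrix* if its nonzero entries lie
only on the main diagonal and the anti-diagonal (0-based indices). -/
def IsCrossMatrix {n : ℕ} (X : Matrix (Fin n) (Fin n) ℂ) : Prop :=
  ∀ i j : Fin n, j ≠ i → (i : ℕ) + (j : ℕ) + 1 ≠ n → X i j = 0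

/-- Any cross matrix is symmetrically permutable to a block diagonal matrix
with diagonal blocks of size at most `2`. -/
theorem crossMatrix_perm_block_diagonal {n : ℕ}
    (X : Matrix (Fin n) (Fin n) ℂ) (hX : IsCrossMatrix X) :
    ∃ σ : Equiv.Perm (Fin n),
      ∀ i j : Fin n, (i : ℕ) / 2 ≠ (j : ℕ) / 2 → X (σ i) (σ j) = 0 := by
  let f : Fin n → Fin n := fun i =>
    ⟨if (i : ℕ) % 2 = 0 then (i : ℕ) / 2 else n - 1 - (i : ℕ) / 2, by
      have := i.isLt; split_ifs <;> omega⟩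
  have hval : ∀ i : Fin n, (f i : ℕ) =
      if (i : ℕ) % 2 = 0 then (i : ℕ) / 2 else n - 1 - (i : ℕ) / 2 := fun i => rfl
  have hinj : Function.Injective f := by
    intro i j h
    have h' : (f i : ℕ) = (f j : ℕ) := congrArg Fin.val h
    rw [hval, hval] at h'
    have hi := i.isLt; have hj := j.isLt
    ext
    split_ifs at h' <;> omega
  have hbij : Function.Bijective f := (Finite.injective_iff_bijective).mp hinj
  refine ⟨Equiv.ofBijective f hbij, ?_⟩
  intro i j hij
  simp only [Equiv.ofBijective_apply]
  apply hX
  · intro h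
    exact hij ((congrArg (fun k : Fin n => (k : ℕ) / 2) (hinj h)).symm)
  · intro h
    rw [hval, hval] at h
    have hi := i.isLt; have hj := j.isLt
    split_ifs at h <;> omega
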